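/- For every integer m ≥ 1, every integer r ≥ 2, every vector a = (a_1,…,a_r) of nonzero real numbers and all x_2,…,x_r ∈ ℝ, one has ζ_fml(1−m, a, (1, x_2,…,x_r)) + ζ_fml(1−m, (−a_1, a_2,…,a_r), (1, x_2,…,x_r)) + ζ_fml(1−m, (a_2,…,a_r), (x_2,…,x_r)) = 0. -/

import Mathlib

open scoped BigOperators

/-- The formal multiple zeta value `zetaFml m a x = ζ_fml(1 - m, a, x)` of the paper:
`(-1)^r (m-1)! ∑_{l, Σ l i = m + r - 1} ∏_i B_{l i}(x i) * (a i)^(l i - 1) / (l i)!`,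
where `B_l` is the `l`-th Bernoulli polynomial (normalized with `B₁(X) = X - 1/2`)
and `(a i)^(l i - 1)` is an integer (`zpow`) power. -/
noncomputable def zetaFml (m : ℕ) {r : ℕ} (a x : Fin r → ℝ) : ℝ :=
  (-1 : ℝ) ^ r * (Nat.factorial (m - 1)) *
    ∑ l ∈ Finset.Nat.antidiagonalTuple r (m + r - 1),
      ∏ i, Polynomial.aeval (x i) (Polynomial.bernoulli (l i)) * a i ^ ((l i : ℤ) - 1)
        / (Nat.factorial (l i))

lemma sum_antidiagonalTuple_succ {k n : ℕ} (F : (Fin (k + 1) → ℕ) → ℝ) :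
    ∑ l ∈ Finset.Nat.antidiagonalTuple (k + 1) n, F l
      = ∑ p ∈ Finset.HasAntidiagonal.antidiagonal n,
          ∑ l ∈ Finset.Nat.antidiagonalTuple k p.2, F (Fin.cons p.1 l) := by
  rw [Finset.sum_sigma']
  refine Finset.sum_nbij' (fun l => ⟨(l 0, ∑ i, Fin.tail l i), Fin.tail l⟩)
    (fun x => Fin.cons x.1.1 x.2) ?_ ?_ ?_ ?_ ?_
  · intro l hl
    simp only [Finset.Nat.mem_antidiagonalTuple, Fin.sum_univ_succ] at hl
    simp [Finset.mem_sigma, Finset.HasAntidiagonal.mem_antidiagonal, Finset.Nat.mem_antidiagonalTuple,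
      Fin.tail, hl.symm]
  · intro x hx
    simp only [Finset.mem_sigma, Finset.HasAntidiagonal.mem_antidiagonal,
      Finset.Nat.mem_antidiagonalTuple] at hx
    simp [Finset.Nat.mem_antidiagonalTuple, Fin.sum_univ_succ, hx.2, hx.1]
  · intro l _; exact Fin.cons_self_tail l
  · intro x hx
    simp only [Finset.mem_sigma, Finset.HasAntidiagonal.mem_antidiagonal,
      Finset.Nat.mem_antidiagonalTuple] at hx
    ext
    · simp
    · simp [Fin.tail_cons, hx.2]
    · simp [Fin.tail_cons]
  · intro l _; rw [Fin.cons_self_tail]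

lemma key_coeff (b : ℝ) (l : ℕ) :
    (Polynomial.aeval (1 : ℝ)) (Polynomial.bernoulli l) * b ^ ((l : ℤ) - 1) / l.factorial
      + (Polynomial.aeval (1 : ℝ)) (Polynomial.bernoulli l) * (-b) ^ ((l : ℤ) - 1) / l.factorial
      = if l = 1 then 1 else 0 := by
  have heval : (Polynomial.aeval (1 : ℝ)) (Polynomial.bernoulli l)
      = algebraMap ℚ ℝ (bernoulli' l) := by
    rw [show (1 : ℝ) = algebraMap ℚ ℝ 1 by simp, Polynomial.aeval_algebraMap_apply]
    simp [Polynomial.bernoulli_eval_one]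
  rcases eq_or_ne l 1 with rfl | hl
  · norm_num [heval, bernoulli'_one]
  · rw [if_neg hl]
    rcases Nat.even_or_odd l with he | ho
    · have hodd : Odd ((l : ℤ) - 1) := by
        rcases he with ⟨c, hc⟩
        exact ⟨c - 1, by push_cast [hc]; ring⟩
      rw [hodd.neg_zpow]
      ring
    · have h1 : 1 < l := by
        rcases Nat.lt_or_ge l 2 with h | h
        · interval_cases l
          · exact absurd ho (by simp)
          · exact absurd rfl hl
        · omega
      rw [heval, bernoulli'_eq_zero_of_odd ho h1]
      simp

theorem zetaFml_three_term (m : ℕ) (hm : 1 ≤ m) (r : ℕ) (a : Fin (r + 2) → ℝ)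
    (ha : ∀ i, a i ≠ 0) (x : Fin (r + 1) → ℝ) :
    zetaFml m a (Fin.cons 1 x) + zetaFml m (Function.update a 0 (-(a 0))) (Fin.cons 1 x)
      + zetaFml m (fun i => a i.succ) x = 0 := by
  have hN : m + (r + 2) - 1 = m + r + 1 := by omega
  have hN' : m + (r + 1) - 1 = m + r := by omega
  set P : (Fin (r + 1) → ℕ) → ℝ := fun l =>
    ∏ i, Polynomial.aeval (x i) (Polynomial.bernoulli (l i)) * a i.succ ^ ((l i : ℤ) - 1)
      / (Nat.factorial (l i)) with hP
  set T : ℝ := ∑ l ∈ Finset.Nat.antidiagonalTuple (r + 1) (m + r), P l with hT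
  have split : ∀ b : Fin (r + 2) → ℝ,
      (∑ l ∈ Finset.Nat.antidiagonalTuple (r + 2) (m + (r + 2) - 1),
        ∏ i, Polynomial.aeval ((Fin.cons 1 x : Fin (r + 2) → ℝ) i)
          (Polynomial.bernoulli (l i)) * b i ^ ((l i : ℤ) - 1) / (Nat.factorial (l i)))
      = ∑ p ∈ Finset.HasAntidiagonal.antidiagonal (m + r + 1),
          ((Polynomial.aeval (1 : ℝ)) (Polynomial.bernoulli p.1) * b 0 ^ ((p.1 : ℤ) - 1)
            / p.1.factorial) *
          ∑ l ∈ Finset.Nat.antidiagonalTuple (r + 1) p.2,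
            ∏ i, Polynomial.aeval (x i) (Polynomial.bernoulli (l i))
              * b i.succ ^ ((l i : ℤ) - 1) / (Nat.factorial (l i)) := by
    intro b
    rw [hN, sum_antidiagonalTuple_succ]
    refine Finset.sum_congr rfl fun p _ => ?_
    rw [Finset.mul_sum]
    refine Finset.sum_congr rfl fun l _ => ?_
    rw [Fin.prod_univ_succ]
    simp
  have hb1 : ∀ i : Fin (r + 1), (Function.update a 0 (-(a 0))) i.succ = a i.succ := by
    intro i
    exact Function.update_of_ne (Fin.succ_ne_zero i) _ _
  have hsum : zetaFml m a (Fin.cons 1 x) + zetaFml m (Function.update a 0 (-(a 0))) (Fin.cons 1 x)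
      = (-1 : ℝ) ^ (r + 2) * (Nat.factorial (m - 1)) * T := by
    unfold zetaFml
    rw [← mul_add, split a, split (Function.update a 0 (-(a 0))), ← Finset.sum_add_distrib]
    congr 1
    have : ∀ p ∈ Finset.HasAntidiagonal.antidiagonal (m + r + 1),
        ((Polynomial.aeval (1 : ℝ)) (Polynomial.bernoulli p.1) * a 0 ^ ((p.1 : ℤ) - 1)
            / p.1.factorial) *
          (∑ l ∈ Finset.Nat.antidiagonalTuple (r + 1) p.2,
            ∏ i, Polynomial.aeval (x i) (Polynomial.bernoulli (l i))
              * a i.succ ^ ((l i : ℤ) - 1) / (Nat.factorial (l i))) +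
        ((Polynomial.aeval (1 : ℝ)) (Polynomial.bernoulli p.1)
            * (Function.update a 0 (-(a 0))) 0 ^ ((p.1 : ℤ) - 1) / p.1.factorial) *
          (∑ l ∈ Finset.Nat.antidiagonalTuple (r + 1) p.2,
            ∏ i, Polynomial.aeval (x i) (Polynomial.bernoulli (l i))
              * (Function.update a 0 (-(a 0))) i.succ ^ ((l i : ℤ) - 1)
              / (Nat.factorial (l i)))
        = (if p.1 = 1 then 1 else 0) *
            ∑ l ∈ Finset.Nat.antidiagonalTuple (r + 1) p.2, P l := by
      intro p _
      have hupd : (Function.update a 0 (-(a 0))) 0 = -(a 0) := by simp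
      simp only [hupd, hb1, hP, ← add_mul, key_coeff]
    rw [Finset.sum_congr rfl this, Finset.Nat.sum_antidiagonal_eq_sum_range_succ_mk]
    have h1mem : 1 ∈ Finset.range (m + r + 1 + 1) := by
      simp
    rw [show (∑ k ∈ Finset.range (m + r + 1 + 1), (if (k, m + r + 1 - k).1 = 1 then (1:ℝ) else 0) *
        ∑ l ∈ Finset.Nat.antidiagonalTuple (r + 1) (k, m + r + 1 - k).2, P l)
      = ∑ k ∈ Finset.range (m + r + 1 + 1), (if k = 1 then
        (∑ l ∈ Finset.Nat.antidiagonalTuple (r + 1) (m + r + 1 - k), P l) else 0) from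
        Finset.sum_congr rfl fun k _ => by split <;> simp]
    rw [Finset.sum_ite_eq' (Finset.range (m + r + 1 + 1)) 1, if_pos h1mem]
    norm_num [hT]
  rw [hsum]
  unfold zetaFml
  rw [hN', ← hP, ← hT]
  ring
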